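/- Let H be a complex Hilbert space, -1 < q < 1, and let F_alg(H) be the algebraic full Fock space over H. Define ℓ(h)* on F_alg(H) by ℓ(h)*(h₁⊗⋯⊗hₙ) = Σ_{k=1}^{n} q^{k-1} ⟨h_k, h⟩ h₁⊗⋯⊗ĥ_k⊗⋯⊗hₙ (ĥ_k means omission), ℓ(h)*Ω = 0, and let r(g) be the right creation operator. Then for every n ≥ 0 and every ξ ∈ H^{⊗n}, [ℓ(h)*, r(g)] ξ = q^n ⟨g, h⟩ ξ, i.e. [ℓ(h)*, r(g)] = ⟨g,h⟩ Σ_{n≥0} q^n P_n where P_n is the projection onto H^{⊗n}. -/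

import Mathlib

open scoped TensorProduct
open PiTensorProduct

/-- On the algebraic full Fock space `F_alg(H) = ⊕_{n≥0} H^{⊗n}` (with `H^{⊗0} = ℂΩ`),
let `A = ℓ(h)*` be the `q`-deformed annihilation operator, determined by
`ℓ(h)* Ω = 0` and `ℓ(h)* (h₁⊗⋯⊗hₙ) = Σ_k q^{k-1} ⟨h_k, h⟩ h₁⊗⋯⊗ĥ_k⊗⋯⊗hₙ`,
and let `R = r(g)` be the right creation operator, `r(g)(h₁⊗⋯⊗hₙ) = h₁⊗⋯⊗hₙ⊗g`.
Then for every `n ≥ 0` and every `ξ ∈ H^{⊗n}`, `[ℓ(h)*, r(g)] ξ = q^n ⟨g,h⟩ ξ`,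
i.e. `[ℓ(h)*, r(g)] = ⟨g,h⟩ Σ_{n≥0} q^n P_n`. -/
theorem q_annihilation_right_creation_commutator
    (H : Type) [NormedAddCommGroup H] [InnerProductSpace ℂ H]
    (q : ℝ) (hq₁ : -1 < q) (hq₂ : q < 1) (h g : H)
    (A R : (DirectSum ℕ (fun n => ⨂[ℂ] (_ : Fin n), H)) →ₗ[ℂ] (DirectSum ℕ (fun n => ⨂[ℂ] (_ : Fin n), H)))
    (hA0 : A (DirectSum.of (fun n => ⨂[ℂ] (_ : Fin n), H) 0
        (tprod ℂ (fun i : Fin 0 => i.elim0))) = 0)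
    (hA : ∀ (n : ℕ) (f : Fin (n + 1) → H),
      A (DirectSum.of (fun n => ⨂[ℂ] (_ : Fin n), H) (n + 1) (tprod ℂ f)) =
        DirectSum.of (fun n => ⨂[ℂ] (_ : Fin n), H) n
          (∑ k : Fin (n + 1),
            ((q : ℂ) ^ (k : ℕ) * (inner ℂ (f k) h : ℂ)) •
              tprod ℂ (fun i : Fin n => f (k.succAbove i))))
    (hR : ∀ (n : ℕ) (f : Fin n → H),
      R (DirectSum.of (fun n => ⨂[ℂ] (_ : Fin n), H) n (tprod ℂ f)) =
        DirectSum.of (fun n => ⨂[ℂ] (_ : Fin n), H) (n + 1) (tprod ℂ (Fin.snoc f g))) :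
    ∀ (n : ℕ) (x : ⨂[ℂ] (_ : Fin n), H),
      A (R (DirectSum.of (fun n => ⨂[ℂ] (_ : Fin n), H) n x))
        - R (A (DirectSum.of (fun n => ⨂[ℂ] (_ : Fin n), H) n x)) =
        ((q : ℂ) ^ n * (inner ℂ g h : ℂ)) •
          DirectSum.of (fun n => ⨂[ℂ] (_ : Fin n), H) n x := by
  have key : ∀ (n : ℕ) (f : Fin n → H),
      A (R (DirectSum.of (fun n => ⨂[ℂ] (_ : Fin n), H) n (tprod ℂ f)))
        - R (A (DirectSum.of (fun n => ⨂[ℂ] (_ : Fin n), H) n (tprod ℂ f))) =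
        ((q : ℂ) ^ n * (inner ℂ g h : ℂ)) •
          DirectSum.of (fun n => ⨂[ℂ] (_ : Fin n), H) n (tprod ℂ f) := by
    intro n f
    cases n with
    | zero =>
      have hf : f = fun i : Fin 0 => i.elim0 := by funext i; exact i.elim0
      subst hf
      rw [hR 0, hA0, map_zero, sub_zero, hA 0]
      rw [show (Finset.univ : Finset (Fin 1)) = {0} by rfl, Finset.sum_singleton]
      have h0 : (Fin.snoc (fun i : Fin 0 => i.elim0) g : Fin 1 → H) (0 : Fin 1) = g := by
        rw [show (0 : Fin 1) = Fin.last 0 from rfl, Fin.snoc_last]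
      have h1 : (fun i : Fin 0 => (Fin.snoc (fun i : Fin 0 => i.elim0) g : Fin 1 → H) ((0 : Fin 1).succAbove i))
          = fun i : Fin 0 => i.elim0 := by funext i; exact i.elim0
      rw [h0, h1, pow_zero, DirectSum.of_smul]
      simp
    | succ m =>
      rw [hR (m + 1) f, hA (m + 1), hA m f]
      rw [map_sum (DirectSum.of (fun n => ⨂[ℂ] (_ : Fin n), H) (m + 1)),
        map_sum (DirectSum.of (fun n => ⨂[ℂ] (_ : Fin n), H) m), map_sum R]
      simp only [DirectSum.of_smul, map_smul, hR m]
      rw [Fin.sum_univ_castSucc]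
      have hlast : ((q : ℂ) ^ (((Fin.last (m + 1)) : Fin (m + 2)) : ℕ)
            * (inner ℂ ((Fin.snoc f g : Fin (m + 2) → H) (Fin.last (m + 1))) h : ℂ)) •
            DirectSum.of (fun n => ⨂[ℂ] (_ : Fin n), H) (m + 1)
              (tprod ℂ (fun i : Fin (m + 1) =>
                (Fin.snoc f g : Fin (m + 2) → H) ((Fin.last (m + 1)).succAbove i)))
          = ((q : ℂ) ^ (m + 1) * (inner ℂ g h : ℂ)) •
            DirectSum.of (fun n => ⨂[ℂ] (_ : Fin n), H) (m + 1) (tprod ℂ f) := by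
        congr 2
        · rw [Fin.snoc_last]
        · refine congrArg _ (funext fun i : Fin (m + 1) => ?_)
          rw [Fin.succAbove_last_apply, Fin.snoc_castSucc]
      have hcast : ∀ k : Fin (m + 1),
          ((q : ℂ) ^ ((k.castSucc : Fin (m + 2)) : ℕ)
            * (inner ℂ ((Fin.snoc f g : Fin (m + 2) → H) k.castSucc) h : ℂ)) •
            DirectSum.of (fun n => ⨂[ℂ] (_ : Fin n), H) (m + 1)
              (tprod ℂ (fun i : Fin (m + 1) =>
                (Fin.snoc f g : Fin (m + 2) → H) (k.castSucc.succAbove i)))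
          = ((q : ℂ) ^ (k : ℕ) * (inner ℂ (f k) h : ℂ)) •
            DirectSum.of (fun n => ⨂[ℂ] (_ : Fin n), H) (m + 1)
              (tprod ℂ (Fin.snoc (fun i : Fin m => f (k.succAbove i)) g : Fin (m + 1) → H)) := by
        intro k
        congr 2
        · rw [Fin.snoc_castSucc]
        · refine congrArg _ (funext fun i : Fin (m + 1) => ?_)
          cases i using Fin.lastCases with
          | last =>
            rw [Fin.snoc_last, Fin.succAbove_castSucc_of_le _ _ (Fin.le_last k),
              Fin.succ_last, Fin.snoc_last]
          | cast j =>
            rw [Fin.snoc_castSucc, Fin.castSucc_succAbove_castSucc, Fin.snoc_castSucc]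
      rw [hlast, Finset.sum_congr rfl (fun k _ => hcast k)]
      abel
  intro n x
  induction x using PiTensorProduct.induction_on with
  | smul_tprod c f =>
    simp only [DirectSum.of_smul, map_smul, ← smul_sub, key, smul_comm c]
    rw [smul_comm _ c, ← key, smul_sub]
  | add x y hx hy =>
    simp only [map_add]
    rw [smul_add, ← hx, ← hy]
    abel
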